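/- arXiv:2406.05256 — 4 statements merged into one kernel-verified Lean document; each statement's English description precedes it below -/
import Mathlib

section
/- Let N, d ≥ 1, let P be a nonempty compact subset of the probability simplex Δ_N, let Q : {0,1}^d × {1,…,N} → ℝ, and let cut coefficients (α_i, β_i) ∈ ℝ^d × ℝ, i = 1,…,N, be valid for Q. Fix x̂ ∈ {0,1}^d and define, for each coordinate j ∈ {1,…,d}, π_j := inf_{p∈P} ∑_{i=1}^N p_i α_{i,j} if x̂_j = 0 and π_j := sup_{p∈P} ∑_{i=1}^N p_i α_{i,j} if x̂_j = 1, and define γ := inf_{p∈P} ∑_{i=1}^N p_i (α_iᵀ x̂ + β_i). Then for every x ∈ {0,1}^d one has πᵀ(x − x̂) + γ ≤ inf_{p∈P} ∑_{i=1}^N p_i Q(x,i); that is, the cutting-plane function φ^C(x) := πᵀ(x − x̂) + γ is a lower bound for the optimistic expected cost-to-go function Q^RR(x). -/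
/-- The cutting-plane function `φ^C(x) = πᵀ(x − xhat) + γ` is a lower bound for
the optimistic expected cost-to-go function `Q^RR(x) = inf_{p ∈ P} ∑ i, p i * Q x i`. -/
theorem drr_cutting_plane_lower_bound
    {N d : ℕ} (hN : 1 ≤ N) (hd : 1 ≤ d)
    (P : Set (Fin N → ℝ)) (hPne : P.Nonempty) (hPcomp : IsCompact P)
    (hPsimplex : ∀ p ∈ P, (∀ i, 0 ≤ p i) ∧ (∑ i, p i) = 1)
    (Q : (Fin d → ℝ) → Fin N → ℝ)
    (α : Fin N → Fin d → ℝ) (β : Fin N → ℝ)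
    (hvalid : ∀ x : Fin d → ℝ, (∀ j, x j = 0 ∨ x j = 1) →
      ∀ i, (∑ j, α i j * x j) + β i ≤ Q x i)
    (xhat : Fin d → ℝ) (hxhat : ∀ j, xhat j = 0 ∨ xhat j = 1)
    (π : Fin d → ℝ)
    (hπ0 : ∀ j, xhat j = 0 → π j = sInf ((fun p : Fin N → ℝ => ∑ i, p i * α i j) '' P))
    (hπ1 : ∀ j, xhat j = 1 → π j = sSup ((fun p : Fin N → ℝ => ∑ i, p i * α i j) '' P))
    (γ : ℝ)
    (hγ : γ = sInf ((fun p : Fin N → ℝ =>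
      ∑ i, p i * ((∑ j, α i j * xhat j) + β i)) '' P)) :
    ∀ x : Fin d → ℝ, (∀ j, x j = 0 ∨ x j = 1) →
      (∑ j, π j * (x j - xhat j)) + γ ≤
        sInf ((fun p : Fin N → ℝ => ∑ i, p i * Q x i) '' P) := by
  intro x hx
  have hcont : ∀ (g : Fin N → ℝ), Continuous (fun p : Fin N → ℝ => ∑ i, p i * g i) := by
    intro g
    exact continuous_finset_sum _ fun i _ => (continuous_apply i).mul continuous_const
  refine le_csInf (hPne.image _) ?_
  rintro _ ⟨p, hpP, rfl⟩
  have h1 : ∑ i, p i * ((∑ j, α i j * x j) + β i) ≤ ∑ i, p i * Q x i :=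
    Finset.sum_le_sum fun i _ =>
      mul_le_mul_of_nonneg_left (hvalid x hx i) ((hPsimplex p hpP).1 i)
  refine le_trans ?_ h1
  have hsplit : ∑ i, p i * ((∑ j, α i j * x j) + β i)
      = (∑ j, (∑ i, p i * α i j) * (x j - xhat j))
        + ∑ i, p i * ((∑ j, α i j * xhat j) + β i) := by
    have key : ∀ y : Fin d → ℝ,
        ∑ j, (∑ i, p i * α i j) * y j = ∑ i, p i * ∑ j, α i j * y j := by
      intro y
      simp only [Finset.sum_mul, Finset.mul_sum]
      rw [Finset.sum_comm]
      simp [mul_assoc]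
    rw [key fun j => x j - xhat j]
    rw [← Finset.sum_add_distrib]
    congr 1
    ext i
    have : ∑ j, α i j * (x j - xhat j) = (∑ j, α i j * x j) - ∑ j, α i j * xhat j := by
      simp [mul_sub, Finset.sum_sub_distrib]
    rw [this]; ring
  rw [hsplit]
  have hγle : γ ≤ ∑ i, p i * ((∑ j, α i j * xhat j) + β i) := by
    rw [hγ]
    exact csInf_le (hPcomp.image (hcont _)).bddBelow ⟨p, hpP, rfl⟩
  refine add_le_add (Finset.sum_le_sum fun j _ => ?_) hγle
  rcases hxhat j with h0 | h1'
  · have hnn : 0 ≤ x j - xhat j := by rcases hx j with h | h <;> rw [h, h0] <;> norm_num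
    refine mul_le_mul_of_nonneg_right ?_ hnn
    rw [hπ0 j h0]
    exact csInf_le (hPcomp.image (hcont _)).bddBelow ⟨p, hpP, rfl⟩
  · have hnp : x j - xhat j ≤ 0 := by rcases hx j with h | h <;> rw [h, h1'] <;> norm_num
    refine mul_le_mul_of_nonpos_right ?_ hnp
    rw [hπ1 j h1']
    exact le_csSup (hPcomp.image (hcont _)).bddAbove ⟨p, hpP, rfl⟩
end

section
/- Let N, d ≥ 1, let P be a nonempty compact subset of the probability simplex Δ_N, let α_i ∈ ℝ^d and β_i ∈ ℝ for i ∈ {1,…,N}, and fix x ∈ {0,1}^d. Define φ^B(x) := inf { ∑_{i=1}^N p_i θ_i : p ∈ P, θ ∈ ℝ^N, θ_i ≥ α_iᵀ x + β_i for all i } and φ^R(x) := inf { ∑_{i=1}^N θ̄_i : p ∈ P, θ̄ ∈ ℝ^N, η_1,…,η_N ∈ ℝ^d, θ̄_i ≥ α_iᵀ η_i + β_i p_i for all i, and for all i and j: η_{i,j} ≤ x_j, η_{i,j} ≤ p_i, η_{i,j} ≥ p_i + x_j − 1, η_{i,j} ≥ 0 }. Then φ^R(x) = φ^B(x), and both are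 equal to inf_{p∈P} ∑_{i=1}^N p_i (α_iᵀ x + β_i). -/
lemma sInf_eq_sInf_aux (S T : Set ℝ) (hTne : T.Nonempty) (hTb : BddBelow T)
    (hsub : T ⊆ S) (h : ∀ v ∈ S, ∃ t ∈ T, t ≤ v) : sInf S = sInf T := by
  have hSb : BddBelow S := ⟨sInf T, fun v hv => by
    obtain ⟨t, ht, htv⟩ := h v hv
    exact le_trans (csInf_le hTb ht) htv⟩
  refine le_antisymm (csInf_le_csInf hSb hTne hsub) ?_
  refine le_csInf (hTne.mono hsub) (fun v hv => ?_)
  obtain ⟨t, ht, htv⟩ := h v hv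
  exact le_trans (csInf_le hTb ht) htv

/-- The McCormick reformulation-based value `φ^R(x)` equals the bilinear
value `φ^B(x)`, and both equal `inf_{p∈P} ∑ i, p i * (α_iᵀ x + β_i)`, for binary `x`. -/
theorem drr_reformulation_eq_bilinear
    {N d : ℕ} (hN : 1 ≤ N) (hd : 1 ≤ d)
    (P : Set (Fin N → ℝ)) (hPne : P.Nonempty) (hPcomp : IsCompact P)
    (hPsimplex : ∀ p ∈ P, (∀ i, 0 ≤ p i) ∧ (∑ i, p i) = 1)
    (α : Fin N → Fin d → ℝ) (β : Fin N → ℝ)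
    (x : Fin d → ℝ) (hx : ∀ j, x j = 0 ∨ x j = 1) :
    sInf {v : ℝ | ∃ p ∈ P, ∃ θbar : Fin N → ℝ, ∃ η : Fin N → Fin d → ℝ,
        (∀ i, (∑ j, α i j * η i j) + β i * p i ≤ θbar i) ∧
        (∀ i j, η i j ≤ x j) ∧ (∀ i j, η i j ≤ p i) ∧
        (∀ i j, p i + x j - 1 ≤ η i j) ∧ (∀ i j, 0 ≤ η i j) ∧
        v = ∑ i, θbar i} =
      sInf {v : ℝ | ∃ p ∈ P, ∃ θ : Fin N → ℝ,
        (∀ i, (∑ j, α i j * x j) + β i ≤ θ i) ∧ v = ∑ i, p i * θ i} ∧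
    sInf {v : ℝ | ∃ p ∈ P, ∃ θ : Fin N → ℝ,
        (∀ i, (∑ j, α i j * x j) + β i ≤ θ i) ∧ v = ∑ i, p i * θ i} =
      sInf ((fun p : Fin N → ℝ => ∑ i, p i * ((∑ j, α i j * x j) + β i)) '' P) := by
  set g : (Fin N → ℝ) → ℝ := fun p => ∑ i, p i * ((∑ j, α i j * x j) + β i) with hg
  set T : Set ℝ := g '' P with hT
  have hTne : T.Nonempty := hPne.image g
  have hgcont : Continuous g := by
    apply continuous_finset_sum
    intro i _
    exact (continuous_apply i).mul continuous_const
  have hTb : BddBelow T := (hPcomp.image hgcont).bddBelow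
  have hple : ∀ p ∈ P, ∀ i, p i ≤ 1 := by
    intro p hp i
    obtain ⟨hnn, hsum⟩ := hPsimplex p hp
    calc p i ≤ ∑ k, p k := Finset.single_le_sum (fun k _ => hnn k) (Finset.mem_univ i)
    _ = 1 := hsum
  -- φ^B = inf g
  have hB : sInf {v : ℝ | ∃ p ∈ P, ∃ θ : Fin N → ℝ,
        (∀ i, (∑ j, α i j * x j) + β i ≤ θ i) ∧ v = ∑ i, p i * θ i} = sInf T := by
    apply sInf_eq_sInf_aux _ _ hTne hTb
    · rintro v ⟨p, hp, rfl⟩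
      exact ⟨p, hp, fun i => (∑ j, α i j * x j) + β i, fun i => le_refl _, rfl⟩
    · rintro v ⟨p, hp, θ, hθ, rfl⟩
      refine ⟨g p, ⟨p, hp, rfl⟩, ?_⟩
      apply Finset.sum_le_sum
      intro i _
      exact mul_le_mul_of_nonneg_left (hθ i) ((hPsimplex p hp).1 i)
  -- φ^R = inf g
  have hR : sInf {v : ℝ | ∃ p ∈ P, ∃ θbar : Fin N → ℝ, ∃ η : Fin N → Fin d → ℝ,
        (∀ i, (∑ j, α i j * η i j) + β i * p i ≤ θbar i) ∧
        (∀ i j, η i j ≤ x j) ∧ (∀ i j, η i j ≤ p i) ∧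
        (∀ i j, p i + x j - 1 ≤ η i j) ∧ (∀ i j, 0 ≤ η i j) ∧
        v = ∑ i, θbar i} = sInf T := by
    apply sInf_eq_sInf_aux _ _ hTne hTb
    · rintro v ⟨p, hp, rfl⟩
      have hnn := (hPsimplex p hp).1
      refine ⟨p, hp, fun i => p i * ((∑ j, α i j * x j) + β i),
        fun i j => p i * x j, ?_, ?_, ?_, ?_, ?_, rfl⟩
      · intro i
        have : ∑ j, α i j * (p i * x j) = p i * ∑ j, α i j * x j := by
          rw [Finset.mul_sum]; apply Finset.sum_congr rfl; intro j _; ring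
        rw [this]; ring_nf; rfl
      · intro i j
        dsimp only
        rcases hx j with h0 | h1
        · rw [h0, mul_zero]
        · rw [h1, mul_one]; exact hple p hp i
      · intro i j
        dsimp only
        rcases hx j with h0 | h1
        · rw [h0, mul_zero]; exact hnn i
        · rw [h1, mul_one]
      · intro i j
        dsimp only
        rcases hx j with h0 | h1
        · rw [h0, mul_zero]; linarith [hple p hp i]
        · rw [h1, mul_one]; linarith
      · intro i j
        dsimp only
        rcases hx j with h0 | h1
        · rw [h0, mul_zero]
        · rw [h1, mul_one]; exact hnn i
    · rintro v ⟨p, hp, θbar, η, hθ, h1, h2, h3, h4, rfl⟩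
      refine ⟨g p, ⟨p, hp, rfl⟩, ?_⟩
      have hη : ∀ i j, η i j = p i * x j := by
        intro i j
        rcases hx j with h0 | hone
        · rw [h0, mul_zero]
          exact le_antisymm (h0 ▸ h1 i j) (h4 i j)
        · rw [hone, mul_one]
          refine le_antisymm (h2 i j) ?_
          have := h3 i j
          rw [hone] at this; linarith
      apply Finset.sum_le_sum
      intro i _
      refine le_trans (le_of_eq ?_) (hθ i)
      have : ∑ j, α i j * η i j = p i * ∑ j, α i j * x j := by
        rw [Finset.mul_sum]
        apply Finset.sum_congr rfl
        intro j _
        rw [hη i j]; ring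
      rw [this]; ring
  exact ⟨hR.trans hB.symm, hB⟩
end

section
/- Let d_x, d_ω, K ≥ 1, let A, C be real d_ω × d_x matrices, c ∈ ℝ^{d_x}, let π^k ∈ ℝ^{d_x} and γ^k ∈ ℝ for k = 1,…,K, let l, u, ω^i ∈ ℝ^{d_ω}, let x_prev ∈ ℝ^{d_x}, and let n be a seminorm on ℝ^{d_ω}. Suppose ρ ≥ 0 and multipliers λ, μ, ν ∈ ℝ^{d_ω} with λ, μ, ν ≥ 0 and ζ ∈ ℝ^K with ζ ≥ 0 satisfy: Aᵀλ − ∑_{k=1}^K ζ_k π^k = c, ∑_{k=1}^K ζ_k = 1, and (λ − μ + ν)ᵀ w ≤ ρ · n(w) for all w ∈ ℝ^{d_ω} (the dual-norm condition ‖λ − μ + ν‖_* ≤ ρ). Then every (x, ω, θ) ∈ ℝ^{d_x} × ℝ^{d_ω} × ℝ satisfying the primal constraints A x ≥ ω − C x_prev, l ≤ ω ≤ u, and θ ≥ (π^k)ᵀ x + γ^k for all k, obeys the inequality ρ · n(ω − ω^i) + cᵀ x + θ ≥ (−λ)ᵀ (C x_prev) + μᵀ l − νᵀ u + (λ − μ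 + ν)ᵀ ω^i + ∑_{k=1}^K ζ_k γ^k. -/
/-- Lagrangian weak duality for the per-scenario inner minimization of the
decision-dependent Wasserstein DRR dual: multipliers feasible to the dual system yield a
valid lower bound on the primal objective `ρ·n(ω − ω^i) + cᵀx + θ`. -/
theorem drr_continuous_weak_duality
    {dx dω K : ℕ} (hdx : 1 ≤ dx) (hdω : 1 ≤ dω) (hK : 1 ≤ K)
    (A C : Matrix (Fin dω) (Fin dx) ℝ) (c : Fin dx → ℝ)
    (π : Fin K → Fin dx → ℝ) (γ : Fin K → ℝ)
    (l u ωi : Fin dω → ℝ) (xprev : Fin dx → ℝ)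
    (n : Seminorm ℝ (Fin dω → ℝ))
    (ρ : ℝ) (hρ : 0 ≤ ρ)
    (lam mu nu : Fin dω → ℝ) (ζ : Fin K → ℝ)
    (hlam : ∀ i, 0 ≤ lam i) (hmu : ∀ i, 0 ≤ mu i) (hnu : ∀ i, 0 ≤ nu i)
    (hζ : ∀ k, 0 ≤ ζ k)
    (hstat : ∀ j, (∑ i, A i j * lam i) - (∑ k, ζ k * π k j) = c j)
    (hζsum : (∑ k, ζ k) = 1)
    (hdualnorm : ∀ w : Fin dω → ℝ, (∑ i, (lam i - mu i + nu i) * w i) ≤ ρ * n w) :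
    ∀ (x : Fin dx → ℝ) (ω : Fin dω → ℝ) (θ : ℝ),
      (∀ i, ω i - (∑ j, C i j * xprev j) ≤ ∑ j, A i j * x j) →
      (∀ i, l i ≤ ω i) → (∀ i, ω i ≤ u i) →
      (∀ k, (∑ j, π k j * x j) + γ k ≤ θ) →
      (∑ i, (-(lam i)) * (∑ j, C i j * xprev j)) + (∑ i, mu i * l i) - (∑ i, nu i * u i)
          + (∑ i, (lam i - mu i + nu i) * ωi i) + (∑ k, ζ k * γ k) ≤
        ρ * n (ω - ωi) + (∑ j, c j * x j) + θ := by
  intro x ω θ hA hl hu hθ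
  -- dual norm bound with w = ωi - ω
  have h1 : (∑ i, (lam i - mu i + nu i) * (ωi i - ω i)) ≤ ρ * n (ω - ωi) := by
    have hn : n (ωi - ω) = n (ω - ωi) := by
      rw [show (ωi - ω : Fin dω → ℝ) = -(ω - ωi) from (neg_sub ω ωi).symm,
        map_neg_eq_map]
    have h := hdualnorm (ωi - ω)
    rw [hn] at h
    simpa only [Pi.sub_apply] using h
  -- cost identity
  have h2 : (∑ j, c j * x j)
      = (∑ i, lam i * (∑ j, A i j * x j)) - (∑ k, ζ k * (∑ j, π k j * x j)) := by
    have hc : ∀ j, c j * x j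
        = (∑ i, A i j * lam i * x j) - (∑ k, ζ k * π k j * x j) := by
      intro j
      rw [← hstat j, sub_mul, Finset.sum_mul, Finset.sum_mul]
    rw [Finset.sum_congr rfl fun j _ => hc j, Finset.sum_sub_distrib]
    congr 1
    · rw [Finset.sum_comm]
      refine Finset.sum_congr rfl fun i _ => ?_
      rw [Finset.mul_sum]
      exact Finset.sum_congr rfl fun j _ => by ring
    · rw [Finset.sum_comm]
      refine Finset.sum_congr rfl fun k _ => ?_
      rw [Finset.mul_sum]
      exact Finset.sum_congr rfl fun j _ => by ring
  -- θ bound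
  have h3 : (∑ k, ζ k * (∑ j, π k j * x j)) + (∑ k, ζ k * γ k) ≤ θ := by
    have : (∑ k, ζ k * ((∑ j, π k j * x j) + γ k)) ≤ ∑ k, ζ k * θ :=
      Finset.sum_le_sum fun k _ => mul_le_mul_of_nonneg_left (hθ k) (hζ k)
    rw [← Finset.sum_mul, hζsum, one_mul] at this
    calc (∑ k, ζ k * (∑ j, π k j * x j)) + (∑ k, ζ k * γ k)
        = ∑ k, ζ k * ((∑ j, π k j * x j) + γ k) := by
          rw [← Finset.sum_add_distrib]; exact Finset.sum_congr rfl fun k _ => by ring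
      _ ≤ θ := this
  -- Ax bound
  have h4 : (∑ i, lam i * (ω i - (∑ j, C i j * xprev j)))
      ≤ ∑ i, lam i * (∑ j, A i j * x j) :=
    Finset.sum_le_sum fun i _ => mul_le_mul_of_nonneg_left (hA i) (hlam i)
  have h5 : (∑ i, mu i * l i) ≤ ∑ i, mu i * ω i :=
    Finset.sum_le_sum fun i _ => mul_le_mul_of_nonneg_left (hl i) (hmu i)
  have h6 : (∑ i, nu i * ω i) ≤ ∑ i, nu i * u i :=
    Finset.sum_le_sum fun i _ => mul_le_mul_of_nonneg_left (hu i) (hnu i)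
  -- expand composite sums into atoms
  have e1 : (∑ i, (lam i - mu i + nu i) * (ωi i - ω i))
      = (∑ i, lam i * ωi i) - (∑ i, mu i * ωi i) + (∑ i, nu i * ωi i)
        - (∑ i, lam i * ω i) + (∑ i, mu i * ω i) - (∑ i, nu i * ω i) := by
    simp only [← Finset.sum_sub_distrib, ← Finset.sum_add_distrib]
    exact Finset.sum_congr rfl fun i _ => by ring
  have e2 : (∑ i, (lam i - mu i + nu i) * ωi i)
      = (∑ i, lam i * ωi i) - (∑ i, mu i * ωi i) + (∑ i, nu i * ωi i) := by
    simp only [← Finset.sum_sub_distrib, ← Finset.sum_add_distrib]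
    exact Finset.sum_congr rfl fun i _ => by ring
  have e3 : (∑ i, lam i * (ω i - (∑ j, C i j * xprev j)))
      = (∑ i, lam i * ω i) + (∑ i, (-(lam i)) * (∑ j, C i j * xprev j)) := by
    rw [← Finset.sum_add_distrib]
    exact Finset.sum_congr rfl fun i _ => by ring
  linarith [h1, h3, h4, h5, h6]
end

section
/- Fix integers d_x, d_y ≥ 1 and K ≥ 0, a nonempty finite index set H, and for each h ∈ H an integer m_h ≥ 1, matrices A^h ∈ ℝ^{m_h×d_x}, B^h ∈ ℝ^{m_h×d_y}, C^h ∈ ℝ^{m_h×d_x}, and b^h ∈ ℝ^{m_h}; cut data π^k ∈ ℝ^{d_x}, γ^k ∈ ℝ for k = 1,…,K; and a binary vector x̄ ∈ {0,1}^{d_x}. Define the disjunctive set D := { (x, y, φ) ∈ ℝ^{d_x}_+ × ℝ^{d_y}_+ × ℝ_+ : φ ≥ (π^k)ᵀx + γ^k for all k, and there exists h ∈ H with A^h x + B^h y ≥ b^h − C^h x̄ }. Define the lifted polyhedron D̃ as the set of tuples (x, y, φ, (ζ^h_0, ζ^h_1, ζ^h_2, ζ^h_3, ζ^h_4)_{h∈H})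 with ζ^h_0 ∈ ℝ_+, ζ^h_1, ζ^h_3 ∈ ℝ^{d_x}_+, ζ^h_2 ∈ ℝ^{d_y}_+, ζ^h_4 ∈ ℝ_+, x ∈ ℝ^{d_x}_+, y ∈ ℝ^{d_y}_+, φ ∈ ℝ_+, satisfying ∑_{h∈H} ζ^h_0 = 1, ∑_h ζ^h_1 = x, ∑_h ζ^h_2 = y, ∑_h ζ^h_3 = x̄, ∑_h ζ^h_4 = φ, and for every h ∈ H: A^h ζ^h_1 + B^h ζ^h_2 + C^h ζ^h_3 − ζ^h_0 b^h ≥ 0 and ζ^h_4 − (π^k)ᵀ ζ^h_1 − γ^k ζ^h_0 ≥ 0 for all k. Assume: (i) for each h ∈ H, the polyhedron S^h(x̄) := { (x, y) ∈ ℝ^{d_x}_+ × ℝ^{d_y}_+ : A^h x + B^h y ≥ b^h − C^h x̄ } is nonempty and compact, and S^h(w) is compact for every w ∈ [0,1]^{d_x}; (ii) for each h ∈ H, every (x, y, w) with x, y, w ≥ 0 and A^h x + B^h y + C^h w ≥ b^h satisfies w ≤ 1 componentwise. Then conv(D) equals the image of D̃ under the projection (x, y, φ, ζ) ↦ (x,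 y, φ). -/
open Matrix

section aux
variable {dx dy m : ℕ}

lemma recession_trivial
    (A : Matrix (Fin m) (Fin dx) ℝ) (B : Matrix (Fin m) (Fin dy) ℝ)
    (C : Matrix (Fin m) (Fin dx) ℝ) (b : Fin m → ℝ)
    (xbar : Fin dx → ℝ) (hxbar0 : ∀ j, 0 ≤ xbar j)
    (S : Set ((Fin dx → ℝ) × (Fin dy → ℝ)))
    (hSdef : S = {xy : (Fin dx → ℝ) × (Fin dy → ℝ) |
        (∀ j, 0 ≤ xy.1 j) ∧ (∀ j, 0 ≤ xy.2 j) ∧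
        b - C.mulVec xbar ≤ A.mulVec xy.1 + B.mulVec xy.2})
    (hSne : S.Nonempty) (hScomp : IsCompact S)
    (hbox : ∀ x : Fin dx → ℝ, ∀ y : Fin dy → ℝ, ∀ w : Fin dx → ℝ,
        (∀ j, 0 ≤ x j) → (∀ j, 0 ≤ y j) → (∀ j, 0 ≤ w j) →
        b ≤ A.mulVec x + B.mulVec y + C.mulVec w → ∀ j, w j ≤ 1)
    (u : Fin dx → ℝ) (v : Fin dy → ℝ) (w : Fin dx → ℝ)
    (hu : ∀ j, 0 ≤ u j) (hv : ∀ j, 0 ≤ v j) (hw : ∀ j, 0 ≤ w j)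
    (hc : 0 ≤ A.mulVec u + B.mulVec v + C.mulVec w) :
    u = 0 ∧ v = 0 ∧ w = 0 := by
  obtain ⟨⟨x0, y0⟩, hmem⟩ := hSne
  rw [hSdef] at hmem
  obtain ⟨hx0, hy0, hfeas⟩ := hmem
  have hfeas' : ∀ i, b i - C.mulVec xbar i ≤ A.mulVec x0 i + B.mulVec y0 i := by
    intro i; exact (Pi.le_def.mp hfeas i)
  have hc' : ∀ i, 0 ≤ A.mulVec u i + B.mulVec v i + C.mulVec w i := by
    intro i; simpa using (Pi.le_def.mp hc i)
  -- step 1 : w = 0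
  have hw0 : w = 0 := by
    funext j
    by_contra hj
    have hwj : 0 < w j := lt_of_le_of_ne (hw j) (Ne.symm hj)
    set t := 2 / w j with ht
    have htpos : 0 < t := by positivity
    have hfeas2 : b ≤ A.mulVec (x0 + t • u) + B.mulVec (y0 + t • v)
        + C.mulVec (xbar + t • w) := by
      intro i
      simp only [mulVec_add, mulVec_smul, Pi.add_apply, Pi.smul_apply, smul_eq_mul]
      have h1 := hfeas' i
      have h2 := hc' i
      nlinarith [htpos.le]
    have hb := hbox (x0 + t • u) (y0 + t • v) (xbar + t • w)
      (fun j => by simpa using add_nonneg (hx0 j) (mul_nonneg htpos.le (hu j)))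
      (fun j => by simpa using add_nonneg (hy0 j) (mul_nonneg htpos.le (hv j)))
      (fun j => by simpa using add_nonneg (hxbar0 j) (mul_nonneg htpos.le (hw j)))
      hfeas2 j
    simp only [Pi.add_apply, Pi.smul_apply, smul_eq_mul] at hb
    have : t * w j = 2 := by rw [ht]; field_simp [hwj.ne']
    have := hxbar0 j
    linarith
  -- step 2 : ray in S
  have hAB : ∀ i, 0 ≤ A.mulVec u i + B.mulVec v i := by
    intro i; have := hc' i; simp [hw0] at this; simpa using this
  have hray : ∀ t : ℝ, 0 ≤ t → (x0 + t • u, y0 + t • v) ∈ S := by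
    intro t ht
    rw [hSdef]
    refine ⟨fun j => by simpa using add_nonneg (hx0 j) (mul_nonneg ht (hu j)),
      fun j => by simpa using add_nonneg (hy0 j) (mul_nonneg ht (hv j)), ?_⟩
    intro i
    simp only [mulVec_add, mulVec_smul, Pi.add_apply, Pi.smul_apply, smul_eq_mul,
      Pi.sub_apply]
    have h1 := hfeas' i
    have h2 := hAB i
    nlinarith
  obtain ⟨M, hM⟩ := (Metric.isBounded_iff_subset_closedBall 0).mp hScomp.isBounded
  have hM' : ∀ p ∈ S, ‖p‖ ≤ M := by
    intro p hp
    have := hM hp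
    simpa [Metric.mem_closedBall, dist_eq_norm] using this
  have hM0 : 0 ≤ M := le_trans (norm_nonneg _) (hM' _ (hray 0 le_rfl))
  have hu0 : u = 0 := by
    funext j
    by_contra hj
    have huj : 0 < u j := lt_of_le_of_ne (hu j) (Ne.symm hj)
    set t := (M + 1 + |x0 j|) / u j with ht
    have htpos : 0 < t := by positivity
    have hmem := hM' _ (hray t htpos.le)
    have h1 : |(x0 + t • u) j| ≤ M := by
      set p : (Fin dx → ℝ) × (Fin dy → ℝ) := (x0 + t • u, y0 + t • v) with hp
      have e1 : ‖p.1‖ ≤ ‖p‖ := norm_fst_le p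
      have e2 : ‖p.1 j‖ ≤ ‖p.1‖ := norm_le_pi_norm p.1 j
      have e3 : ‖p.1 j‖ = |(x0 + t • u) j| := by rw [hp]; exact Real.norm_eq_abs _
      rw [e3] at e2
      exact le_trans e2 (le_trans e1 hmem)
    have h2 : t * u j = M + 1 + |x0 j| := by rw [ht]; field_simp [huj.ne']
    have h3 : (x0 + t • u) j = x0 j + t * u j := by simp
    rw [h3, h2] at h1
    have h4 := abs_nonneg (x0 j)
    have h5 := le_abs_self (x0 j + (M + 1 + |x0 j|))
    have h6 := neg_abs_le (x0 j)
    linarith [abs_le.mp h1]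
  have hv0 : v = 0 := by
    funext j
    by_contra hj
    have hvj : 0 < v j := lt_of_le_of_ne (hv j) (Ne.symm hj)
    set t := (M + 1 + |y0 j|) / v j with ht
    have htpos : 0 < t := by positivity
    have hmem := hM' _ (hray t htpos.le)
    have h1 : |(y0 + t • v) j| ≤ M := by
      set p : (Fin dx → ℝ) × (Fin dy → ℝ) := (x0 + t • u, y0 + t • v) with hp
      have e1 : ‖p.2‖ ≤ ‖p‖ := norm_snd_le p
      have e2 : ‖p.2 j‖ ≤ ‖p.2‖ := norm_le_pi_norm p.2 j
      have e3 : ‖p.2 j‖ = |(y0 + t • v) j| := by rw [hp]; exact Real.norm_eq_abs _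
      rw [e3] at e2
      exact le_trans e2 (le_trans e1 hmem)
    have h2 : t * v j = M + 1 + |y0 j| := by rw [ht]; field_simp [hvj.ne']
    have h3 : (y0 + t • v) j = y0 j + t * v j := by simp
    rw [h3, h2] at h1
    linarith [abs_le.mp h1, neg_abs_le (y0 j)]
  exact ⟨hu0, hv0, hw0⟩

end aux

/-- Proposition 2: the convex hull of the disjunctive stage-feasible set `D`
equals the projection of the lifted (Balas) polyhedron `D̃` onto the original variables. -/
theorem convexHull_disjunctive_tight_extended_formulation
    {dx dy K : ℕ} (hdx : 1 ≤ dx) (hdy : 1 ≤ dy)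
    {H : Type*} [Fintype H] [Nonempty H]
    (mh : H → ℕ) (hmh : ∀ h, 1 ≤ mh h)
    (A : ∀ h : H, Matrix (Fin (mh h)) (Fin dx) ℝ)
    (B : ∀ h : H, Matrix (Fin (mh h)) (Fin dy) ℝ)
    (C : ∀ h : H, Matrix (Fin (mh h)) (Fin dx) ℝ)
    (b : ∀ h : H, Fin (mh h) → ℝ)
    (π : Fin K → Fin dx → ℝ) (γ : Fin K → ℝ)
    (xbar : Fin dx → ℝ) (hxbar : ∀ j, xbar j = 0 ∨ xbar j = 1)
    -- the per-disjunct polyhedra S^h(w)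
    (S : H → (Fin dx → ℝ) → Set ((Fin dx → ℝ) × (Fin dy → ℝ)))
    (hSdef : ∀ h w, S h w = {xy : (Fin dx → ℝ) × (Fin dy → ℝ) |
        (∀ j, 0 ≤ xy.1 j) ∧ (∀ j, 0 ≤ xy.2 j) ∧
        b h - (C h).mulVec w ≤ (A h).mulVec xy.1 + (B h).mulVec xy.2})
    -- assumption (i): S^h(x̄) nonempty and compact; S^h(w) compact for all w ∈ [0,1]^{dx}
    (hSne : ∀ h, (S h xbar).Nonempty)
    (hScompact_xbar : ∀ h, IsCompact (S h xbar))
    (hScompact : ∀ h, ∀ w : Fin dx → ℝ, (∀ j, 0 ≤ w j ∧ w j ≤ 1) → IsCompact (S h w))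
    -- assumption (ii): feasibility with nonnegative `w` forces `w ≤ 1`
    (hbox : ∀ h, ∀ x : Fin dx → ℝ, ∀ y : Fin dy → ℝ, ∀ w : Fin dx → ℝ,
        (∀ j, 0 ≤ x j) → (∀ j, 0 ≤ y j) → (∀ j, 0 ≤ w j) →
        b h ≤ (A h).mulVec x + (B h).mulVec y + (C h).mulVec w →
        ∀ j, w j ≤ 1)
    -- the disjunctive set D
    (D : Set ((Fin dx → ℝ) × (Fin dy → ℝ) × ℝ))
    (hDdef : D = {z : (Fin dx → ℝ) × (Fin dy → ℝ) × ℝ |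
        (∀ j, 0 ≤ z.1 j) ∧ (∀ j, 0 ≤ z.2.1 j) ∧ 0 ≤ z.2.2 ∧
        (∀ k, (∑ j, π k j * z.1 j) + γ k ≤ z.2.2) ∧
        ∃ h : H, b h - (C h).mulVec xbar ≤ (A h).mulVec z.1 + (B h).mulVec z.2.1}) :
    convexHull ℝ D = {z : (Fin dx → ℝ) × (Fin dy → ℝ) × ℝ |
      (∀ j, 0 ≤ z.1 j) ∧ (∀ j, 0 ≤ z.2.1 j) ∧ 0 ≤ z.2.2 ∧
      ∃ (ζ0 : H → ℝ) (ζ1 : H → Fin dx → ℝ) (ζ2 : H → Fin dy → ℝ)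
        (ζ3 : H → Fin dx → ℝ) (ζ4 : H → ℝ),
        (∀ h, 0 ≤ ζ0 h) ∧ (∀ h j, 0 ≤ ζ1 h j) ∧ (∀ h j, 0 ≤ ζ2 h j) ∧
        (∀ h j, 0 ≤ ζ3 h j) ∧ (∀ h, 0 ≤ ζ4 h) ∧
        (∑ h, ζ0 h) = 1 ∧
        (∀ j, (∑ h, ζ1 h j) = z.1 j) ∧
        (∀ j, (∑ h, ζ2 h j) = z.2.1 j) ∧
        (∀ j, (∑ h, ζ3 h j) = xbar j) ∧
        (∑ h, ζ4 h) = z.2.2 ∧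
        (∀ h, 0 ≤ (A h).mulVec (ζ1 h) + (B h).mulVec (ζ2 h) + (C h).mulVec (ζ3 h)
            - ζ0 h • b h) ∧
        (∀ h, ∀ k, 0 ≤ ζ4 h - (∑ j, π k j * ζ1 h j) - γ k * ζ0 h)} := by
  classical
  have hxbar0 : ∀ j, 0 ≤ xbar j := by
    intro j; rcases hxbar j with e | e <;> simp [e]
  apply Set.Subset.antisymm
  · -- convexHull D ⊆ RHS
    apply convexHull_min
    · -- D ⊆ RHS
      intro z hz
      rw [hDdef] at hz
      obtain ⟨hzx, hzy, hzf, hzcut, h0, hzdisj⟩ := hz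
      refine ⟨hzx, hzy, hzf,
        (fun h => if h = h0 then 1 else 0),
        (fun h j => if h = h0 then z.1 j else 0),
        (fun h j => if h = h0 then z.2.1 j else 0),
        (fun h j => if h = h0 then xbar j else 0),
        (fun h => if h = h0 then z.2.2 else 0),
        ?_, ?_, ?_, ?_, ?_, ?_, ?_, ?_, ?_, ?_, ?_, ?_⟩
      · intro h; by_cases hh : h = h0 <;> simp [hh]
      · intro h j; by_cases hh : h = h0 <;> simp [hh, hzx j]
      · intro h j; by_cases hh : h = h0 <;> simp [hh, hzy j]
      · intro h j; by_cases hh : h = h0 <;> simp [hh, hxbar0 j]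
      · intro h; by_cases hh : h = h0 <;> simp [hh, hzf]
      · simp [Finset.sum_ite_eq']
      · intro j; simp [Finset.sum_ite_eq']
      · intro j; simp [Finset.sum_ite_eq']
      · intro j; simp [Finset.sum_ite_eq']
      · simp [Finset.sum_ite_eq']
      · intro h
        by_cases hh : h = h0
        · subst hh
          intro i
          have hd := Pi.le_def.mp hzdisj i
          simp only [mulVec, dotProduct, Pi.sub_apply, Pi.add_apply, Pi.zero_apply,
            Pi.smul_apply, smul_eq_mul, eq_self_iff_true, if_true] at hd ⊢
          linarith
        · simp only [if_neg hh]
          have e1 : (fun _ : Fin dx => (0:ℝ)) = (0 : Fin dx → ℝ) := rfl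
          have e2 : (fun _ : Fin dy => (0:ℝ)) = (0 : Fin dy → ℝ) := rfl
          rw [e1, e2]
          simp [mulVec_zero]
      · intro h k
        by_cases hh : h = h0
        · subst hh
          simp only [eq_self_iff_true, if_true]
          have := hzcut k
          linarith
        · simp [if_neg hh]
    · -- RHS convex
      rintro z ⟨hzx, hzy, hzf, ζ0, ζ1, ζ2, ζ3, ζ4, k00, k10, k20, k30, k40,
        ks0, ks1, ks2, ks3, ks4, kA, kC⟩
        z' ⟨hzx', hzy', hzf', η0, η1, η2, η3, η4, l00, l10, l20, l30, l40,
        ls0, ls1, ls2, ls3, ls4, lA, lC⟩ a c ha hc hac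
      refine ⟨?_, ?_, ?_,
        (fun h => a * ζ0 h + c * η0 h),
        (fun h => a • ζ1 h + c • η1 h),
        (fun h => a • ζ2 h + c • η2 h),
        (fun h => a • ζ3 h + c • η3 h),
        (fun h => a * ζ4 h + c * η4 h),
        ?_, ?_, ?_, ?_, ?_, ?_, ?_, ?_, ?_, ?_, ?_, ?_⟩
      · intro j
        simp only [Prod.fst_add, Prod.smul_fst, Pi.add_apply, Pi.smul_apply, smul_eq_mul]
        exact add_nonneg (mul_nonneg ha (hzx j)) (mul_nonneg hc (hzx' j))
      · intro j
        simp only [Prod.snd_add, Prod.smul_snd, Prod.fst_add, Prod.smul_fst,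
          Pi.add_apply, Pi.smul_apply, smul_eq_mul]
        exact add_nonneg (mul_nonneg ha (hzy j)) (mul_nonneg hc (hzy' j))
      · simp only [Prod.snd_add, Prod.smul_snd, smul_eq_mul]
        exact add_nonneg (mul_nonneg ha hzf) (mul_nonneg hc hzf')
      · intro h; exact add_nonneg (mul_nonneg ha (k00 h)) (mul_nonneg hc (l00 h))
      · intro h j
        simp only [Pi.add_apply, Pi.smul_apply, smul_eq_mul]
        exact add_nonneg (mul_nonneg ha (k10 h j)) (mul_nonneg hc (l10 h j))
      · intro h j
        simp only [Pi.add_apply, Pi.smul_apply, smul_eq_mul]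
        exact add_nonneg (mul_nonneg ha (k20 h j)) (mul_nonneg hc (l20 h j))
      · intro h j
        simp only [Pi.add_apply, Pi.smul_apply, smul_eq_mul]
        exact add_nonneg (mul_nonneg ha (k30 h j)) (mul_nonneg hc (l30 h j))
      · intro h; exact add_nonneg (mul_nonneg ha (k40 h)) (mul_nonneg hc (l40 h))
      · rw [Finset.sum_add_distrib, ← Finset.mul_sum, ← Finset.mul_sum, ks0, ls0]
        ring_nf
        linarith
      · intro j
        simp only [Pi.add_apply, Pi.smul_apply, smul_eq_mul]
        rw [Finset.sum_add_distrib, ← Finset.mul_sum, ← Finset.mul_sum, ks1 j, ls1 j]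
        simp [smul_eq_mul]
      · intro j
        simp only [Pi.add_apply, Pi.smul_apply, smul_eq_mul]
        rw [Finset.sum_add_distrib, ← Finset.mul_sum, ← Finset.mul_sum, ks2 j, ls2 j]
        simp [smul_eq_mul]
      · intro j
        simp only [Pi.add_apply, Pi.smul_apply, smul_eq_mul]
        rw [Finset.sum_add_distrib, ← Finset.mul_sum, ← Finset.mul_sum, ks3 j, ls3 j]
        have : a * xbar j + c * xbar j = (a + c) * xbar j := by ring
        rw [this, hac, one_mul]
      · rw [Finset.sum_add_distrib, ← Finset.mul_sum, ← Finset.mul_sum, ks4, ls4]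
        simp [smul_eq_mul]
      · intro h
        intro i
        have h1 := Pi.le_def.mp (kA h) i
        have h2 := Pi.le_def.mp (lA h) i
        simp only [mulVec_add, mulVec_smul, Pi.sub_apply, Pi.add_apply, Pi.smul_apply,
          Pi.zero_apply, smul_eq_mul] at h1 h2 ⊢
        nlinarith [mul_le_mul_of_nonneg_left h1 ha, mul_le_mul_of_nonneg_left h2 hc]
      · intro h k
        have h1 := kC h k
        have h2 := lC h k
        have e : ∑ j, π k j * (a • ζ1 h + c • η1 h) j
            = a * (∑ j, π k j * ζ1 h j) + c * (∑ j, π k j * η1 h j) := by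
          rw [Finset.mul_sum, Finset.mul_sum, ← Finset.sum_add_distrib]
          apply Finset.sum_congr rfl
          intro j _
          simp only [Pi.add_apply, Pi.smul_apply, smul_eq_mul]
          ring
        rw [e]
        dsimp only
        nlinarith [mul_le_mul_of_nonneg_left h1 ha, mul_le_mul_of_nonneg_left h2 hc]
  · -- RHS ⊆ convexHull D
    rintro z ⟨hzx, hzy, hzf, ζ0, ζ1, ζ2, ζ3, ζ4, k00, k10, k20, k30, k40,
      ks0, ks1, ks2, ks3, ks4, kA, kC⟩
    set T : Finset H := Finset.univ.filter (fun h => 0 < ζ0 h) with hTdef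
    have hmemT : ∀ h, h ∈ T ↔ 0 < ζ0 h := by intro h; simp [hTdef]
    have hTzero : ∀ h, h ∉ T → ζ0 h = 0 := by
      intro h hh
      have : ¬ 0 < ζ0 h := by simpa [hmemT] using hh
      linarith [k00 h]
    have hzero : ∀ h, h ∉ T → ζ1 h = 0 ∧ ζ2 h = 0 ∧ ζ3 h = 0 := by
      intro h hh
      have h0 : ζ0 h = 0 := hTzero h hh
      refine recession_trivial (A h) (B h) (C h) (b h) xbar hxbar0 (S h xbar)
        (hSdef h xbar) (hSne h) (hScompact_xbar h) (hbox h) _ _ _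
        (k10 h) (k20 h) (k30 h) ?_
      have := kA h
      rw [h0, zero_smul, sub_zero] at this
      exact this
    have hsumT : ∑ h ∈ T, ζ0 h = 1 := by
      rw [← ks0]
      exact Finset.sum_subset (Finset.subset_univ T) (fun h _ hh => hTzero h hh)
    have hTne : T.Nonempty := by
      by_contra hne
      rw [Finset.not_nonempty_iff_eq_empty] at hne
      rw [hne, Finset.sum_empty] at hsumT
      norm_num at hsumT
    obtain ⟨h0, hh0⟩ := hTne
    have hfeasT : ∀ h ∈ T, ∀ i, b h i ≤ ((A h).mulVec ((ζ0 h)⁻¹ • ζ1 h)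
        + (B h).mulVec ((ζ0 h)⁻¹ • ζ2 h) + (C h).mulVec ((ζ0 h)⁻¹ • ζ3 h)) i := by
      intro h hh i
      have hp : 0 < ζ0 h := (hmemT h).mp hh
      have h1 := Pi.le_def.mp (kA h) i
      simp only [Pi.sub_apply, Pi.add_apply, Pi.zero_apply, Pi.smul_apply,
        smul_eq_mul] at h1
      simp only [mulVec_smul, Pi.add_apply, Pi.smul_apply, smul_eq_mul]
      have h2 : ζ0 h * b h i ≤ (A h).mulVec (ζ1 h) i + (B h).mulVec (ζ2 h) i
          + (C h).mulVec (ζ3 h) i := by linarith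
      have h3 := mul_le_mul_of_nonneg_left h2 (inv_nonneg.mpr hp.le)
      rw [← mul_assoc, inv_mul_cancel₀ hp.ne', one_mul] at h3
      nlinarith [h3]
    have hζ3 : ∀ h, ∀ j, ζ3 h j = ζ0 h * xbar j := by
      intro h j
      rcases hxbar j with e | e
      · have hsum : ∑ h', ζ3 h' j = 0 := by rw [ks3 j, e]
        have := (Finset.sum_eq_zero_iff_of_nonneg
          (fun h' _ => k30 h' j)).mp hsum h (Finset.mem_univ h)
        rw [this, e, mul_zero]
      · have hle : ∀ h' ∈ Finset.univ (α := H), ζ3 h' j ≤ ζ0 h' := by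
          intro h' _
          by_cases hh : h' ∈ T
          · have hp : 0 < ζ0 h' := (hmemT h').mp hh
            have hb := hbox h' ((ζ0 h')⁻¹ • ζ1 h') ((ζ0 h')⁻¹ • ζ2 h') ((ζ0 h')⁻¹ • ζ3 h')
              (fun j' => by
                simp only [Pi.smul_apply, smul_eq_mul]
                exact mul_nonneg (inv_nonneg.mpr hp.le) (k10 h' j'))
              (fun j' => by
                simp only [Pi.smul_apply, smul_eq_mul]
                exact mul_nonneg (inv_nonneg.mpr hp.le) (k20 h' j'))
              (fun j' => by
                simp only [Pi.smul_apply, smul_eq_mul]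
                exact mul_nonneg (inv_nonneg.mpr hp.le) (k30 h' j'))
              (by intro i; exact hfeasT h' hh i) j
            simp only [Pi.smul_apply, smul_eq_mul] at hb
            have h4 := mul_le_mul_of_nonneg_left hb hp.le
            rw [← mul_assoc, mul_inv_cancel₀ hp.ne', one_mul, mul_one] at h4
            exact h4
          · rw [(hzero h' hh).2.2, hTzero h' hh]
            simp
        have hsum : ∑ h', ζ3 h' j = ∑ h', ζ0 h' := by rw [ks3 j, e, ks0]
        have := (Finset.sum_eq_sum_iff_of_le hle).mp hsum h (Finset.mem_univ h)
        rw [this, e, mul_one]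
    set sφ : ℝ := ∑ h ∈ Tᶜ, ζ4 h with hsdef
    have hs_nonneg : 0 ≤ sφ := Finset.sum_nonneg (fun h _ => k40 h)
    set p : H → (Fin dx → ℝ) × (Fin dy → ℝ) × ℝ := fun h =>
      ((ζ0 h)⁻¹ • ζ1 h, (ζ0 h)⁻¹ • ζ2 h,
        (ζ0 h)⁻¹ * (ζ4 h + if h = h0 then sφ else 0)) with hpdef
    have hpD : ∀ h ∈ T, p h ∈ D := by
      intro h hh
      have hp : 0 < ζ0 h := (hmemT h).mp hh
      have hite : 0 ≤ (if h = h0 then sφ else 0) := by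
        split
        · exact hs_nonneg
        · exact le_rfl
      rw [hDdef]
      refine ⟨?_, ?_, ?_, ?_, ⟨h, ?_⟩⟩
      · intro j
        simp only [hpdef, Pi.smul_apply, smul_eq_mul]
        exact mul_nonneg (inv_nonneg.mpr hp.le) (k10 h j)
      · intro j
        simp only [hpdef, Pi.smul_apply, smul_eq_mul]
        exact mul_nonneg (inv_nonneg.mpr hp.le) (k20 h j)
      · simp only [hpdef]
        exact mul_nonneg (inv_nonneg.mpr hp.le) (add_nonneg (k40 h) hite)
      · intro k
        have base := kC h k
        have e : ∑ j, π k j * ((ζ0 h)⁻¹ • ζ1 h) j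
            = (ζ0 h)⁻¹ * ∑ j, π k j * ζ1 h j := by
          rw [Finset.mul_sum]
          apply Finset.sum_congr rfl
          intro j _
          simp only [Pi.smul_apply, smul_eq_mul]
          ring
        have h1 : (ζ0 h)⁻¹ * ((∑ j, π k j * ζ1 h j) + γ k * ζ0 h)
            ≤ (ζ0 h)⁻¹ * (ζ4 h + if h = h0 then sφ else 0) :=
          mul_le_mul_of_nonneg_left (by linarith) (inv_nonneg.mpr hp.le)
        have h2 : (ζ0 h)⁻¹ * ((∑ j, π k j * ζ1 h j) + γ k * ζ0 h)
            = (ζ0 h)⁻¹ * (∑ j, π k j * ζ1 h j) + γ k := by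
          field_simp
        simp only [hpdef]
        rw [e]
        linarith
      · have hxeq : (ζ0 h)⁻¹ • ζ3 h = xbar := by
          funext j
          simp only [Pi.smul_apply, smul_eq_mul, hζ3 h j]
          field_simp
        intro i
        have hf := hfeasT h hh i
        rw [hxeq] at hf
        simp only [Pi.sub_apply, Pi.add_apply, hpdef] at hf ⊢
        linarith
    have hkey := Finset.centerMass_mem_convexHull T (fun h _ => k00 h)
      (by rw [hsumT]; norm_num) (fun h hh => hpD h hh)
    rw [Finset.centerMass_eq_of_sum_1 _ _ hsumT] at hkey
    have hz_eq : ∑ h ∈ T, ζ0 h • p h = z := by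
      have hfirst : (∑ h ∈ T, ζ0 h • p h).1 = z.1 := by
        rw [Prod.fst_sum]
        have e1 : ∀ h ∈ T, (ζ0 h • p h).1 = ζ1 h := by
          intro h hh
          have hp : 0 < ζ0 h := (hmemT h).mp hh
          simp only [hpdef, Prod.smul_fst, smul_smul, mul_inv_cancel₀ hp.ne', one_smul]
        rw [Finset.sum_congr rfl e1]
        funext j
        rw [Finset.sum_apply]
        rw [Finset.sum_subset (Finset.subset_univ T)
          (fun h _ hh => by rw [(hzero h hh).1]; rfl)]
        exact ks1 j
      have hsecond : (∑ h ∈ T, ζ0 h • p h).2.1 = z.2.1 := by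
        rw [Prod.snd_sum, Prod.fst_sum]
        have e1 : ∀ h ∈ T, (ζ0 h • p h).2.1 = ζ2 h := by
          intro h hh
          have hp : 0 < ζ0 h := (hmemT h).mp hh
          simp only [hpdef, Prod.smul_snd, Prod.smul_fst, smul_smul,
            mul_inv_cancel₀ hp.ne', one_smul]
        rw [Finset.sum_congr rfl e1]
        funext j
        rw [Finset.sum_apply]
        rw [Finset.sum_subset (Finset.subset_univ T)
          (fun h _ hh => by rw [(hzero h hh).2.1]; rfl)]
        exact ks2 j
      have hthird : (∑ h ∈ T, ζ0 h • p h).2.2 = z.2.2 := by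
        rw [Prod.snd_sum, Prod.snd_sum]
        have e1 : ∀ h ∈ T, (ζ0 h • p h).2.2 = ζ4 h + (if h = h0 then sφ else 0) := by
          intro h hh
          have hp : 0 < ζ0 h := (hmemT h).mp hh
          simp only [hpdef, Prod.smul_snd, smul_eq_mul]
          rw [← mul_assoc, mul_inv_cancel₀ hp.ne', one_mul]
        rw [Finset.sum_congr rfl e1, Finset.sum_add_distrib, Finset.sum_ite_eq' T h0]
        rw [if_pos hh0]
        have := Finset.sum_add_sum_compl T ζ4
        rw [← ks4, ← this, hsdef]
      exact Prod.ext hfirst (Prod.ext hsecond hthird)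
    rw [hz_eq] at hkey
    exact hkey
end
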